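/- Let λ : [0,1] → ℝ be continuous with λ(t) ≥ 0 for all t. Then the infimum, taken over all continuously differentiable bijections σ : [0,1] → [0,1] with σ(0) = 0, σ(1) = 1 and σ'(t) > 0 for all t, of sup_{t ∈ [0,1]} λ(σ(t))·σ'(t), is equal to ∫₀¹ λ(t) dt. -/

import Mathlib

open Set Filter intervalIntegral

/-- The infimum over all C¹ diffeomorphisms `σ` of `[0,1]` fixing the endpoints of
`sup_{t ∈ [0,1]} l (σ t) * σ' t` equals `∫₀¹ l`. -/
theorem stmt_11 (l : ℝ → ℝ) (hl : ContinuousOn l (Set.Icc 0 1))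
    (hl0 : ∀ t ∈ Set.Icc (0:ℝ) 1, 0 ≤ l t) :
    sInf {r : ℝ | ∃ σ σ' : ℝ → ℝ,
        σ 0 = 0 ∧ σ 1 = 1 ∧
        Set.BijOn σ (Set.Icc 0 1) (Set.Icc 0 1) ∧
        (∀ t ∈ Set.Icc (0:ℝ) 1, HasDerivWithinAt σ (σ' t) (Set.Icc 0 1) t) ∧
        ContinuousOn σ' (Set.Icc 0 1) ∧
        (∀ t ∈ Set.Icc (0:ℝ) 1, 0 < σ' t) ∧
        r = sSup ((fun t => l (σ t) * σ' t) '' Set.Icc 0 1)} =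
      ∫ t in (0:ℝ)..1, l t := by
  set I : ℝ := ∫ t in (0:ℝ)..1, l t with hIdef
  set S := {r : ℝ | ∃ σ σ' : ℝ → ℝ,
        σ 0 = 0 ∧ σ 1 = 1 ∧
        Set.BijOn σ (Set.Icc 0 1) (Set.Icc 0 1) ∧
        (∀ t ∈ Set.Icc (0:ℝ) 1, HasDerivWithinAt σ (σ' t) (Set.Icc 0 1) t) ∧
        ContinuousOn σ' (Set.Icc 0 1) ∧
        (∀ t ∈ Set.Icc (0:ℝ) 1, 0 < σ' t) ∧
        r = sSup ((fun t => l (σ t) * σ' t) '' Set.Icc 0 1)} with hSdef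
  have huIcc : Set.uIcc (0:ℝ) 1 = Set.Icc 0 1 := Set.uIcc_of_le zero_le_one
  have hlu : ContinuousOn l (Set.uIcc (0:ℝ) 1) := huIcc ▸ hl
  have hlint : IntervalIntegrable l MeasureTheory.volume 0 1 := hlu.intervalIntegrable
  have hInn : 0 ≤ I := intervalIntegral.integral_nonneg zero_le_one (fun u hu => hl0 u hu)
  -- Part B: lower bound for every member of `S`
  have lower : ∀ r ∈ S, I ≤ r := by
    rintro r ⟨σ, σ', h0, h1, hbij, hderiv, hcont', hpos, hr⟩
    have hσc : ContinuousOn σ (Set.Icc 0 1) :=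
      fun t ht => (hderiv t ht).continuousWithinAt
    have hfc : ContinuousOn (fun t => l (σ t) * σ' t) (Set.Icc 0 1) :=
      (hl.comp hσc hbij.mapsTo).mul hcont'
    have hbdd : BddAbove ((fun t => l (σ t) * σ' t) '' Set.Icc 0 1) :=
      (isCompact_Icc.image_of_continuousOn hfc).bddAbove
    have hle : ∀ t ∈ Set.Icc (0:ℝ) 1, l (σ t) * σ' t ≤ r := by
      intro t ht
      rw [hr]
      exact le_csSup hbdd (Set.mem_image_of_mem _ ht)
    -- change of variables
    have hcov : (∫ x in (0:ℝ)..1, (l ∘ σ) x * σ' x) = ∫ u in (σ 0)..(σ 1), l u := by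
      apply intervalIntegral.integral_comp_mul_deriv''
      · rwa [huIcc]
      · intro x hx
        simp only [min_eq_left (zero_le_one' ℝ), max_eq_right (zero_le_one' ℝ)] at hx
        have hmem : Set.Icc (0:ℝ) 1 ∈ nhds x := Icc_mem_nhds hx.1 hx.2
        exact ((hderiv x (Set.Ioo_subset_Icc_self hx)).hasDerivAt hmem).hasDerivWithinAt
      · rwa [huIcc]
      · rw [huIcc, hbij.image_eq]; exact hl
    have hint1 : (∫ x in (0:ℝ)..1, (l ∘ σ) x * σ' x) = I := by
      rw [hcov, h0, h1]
    have hmono : (∫ x in (0:ℝ)..1, (l ∘ σ) x * σ' x) ≤ ∫ _x in (0:ℝ)..1, r := by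
      apply intervalIntegral.integral_mono_on zero_le_one
      · exact ((huIcc ▸ hfc : ContinuousOn _ (Set.uIcc (0:ℝ) 1))).intervalIntegrable
      · exact intervalIntegrable_const
      · exact hle
    have : (∫ _x in (0:ℝ)..1, r) = r := by simp
    rw [hint1, this] at hmono
    exact hmono
  -- Part A: for every ε > 0 construct a reparametrization with supremum ≤ I + ε
  have upper : ∀ ε : ℝ, 0 < ε → ∃ r ∈ S, r ≤ I + ε := by
    intro ε hε
    set p : ℝ → ℝ := fun t => max 0 (min 1 t) with hpdef
    have hpc : Continuous p := continuous_const.max (continuous_const.min continuous_id)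
    have hpmem : ∀ t : ℝ, p t ∈ Set.Icc (0:ℝ) 1 :=
      fun t => ⟨le_max_left _ _, max_le zero_le_one (min_le_left _ _)⟩
    have hpid : ∀ t ∈ Set.Icc (0:ℝ) 1, p t = t := by
      intro t ht
      simp only [hpdef]
      rw [min_eq_right ht.2, max_eq_right ht.1]
    set g : ℝ → ℝ := fun t => l (p t) + ε with hgdef
    have hgc : Continuous g :=
      (hl.comp_continuous hpc hpmem).add continuous_const
    have hgε : ∀ t, ε ≤ g t := fun t => le_add_of_nonneg_left (hl0 _ (hpmem t))
    have hgpos : ∀ t, 0 < g t := fun t => lt_of_lt_of_le hε (hgε t)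
    set F : ℝ → ℝ := fun s => ∫ u in (0:ℝ)..s, g u with hFdef
    have hF : ∀ b : ℝ, HasDerivAt F (g b) b :=
      fun b => (hgc.integral_hasStrictDerivAt 0 b).hasDerivAt
    have hF0 : F 0 = 0 := intervalIntegral.integral_same
    have hF1 : F 1 = I + ε := by
      have hcongr : (∫ u in (0:ℝ)..1, g u) = ∫ u in (0:ℝ)..1, (l u + ε) := by
        apply intervalIntegral.integral_congr
        intro u hu
        rw [huIcc] at hu
        simp only [hgdef, hpid u hu]
      rw [hFdef]
      simp only [hcongr]
      rw [intervalIntegral.integral_add hlint intervalIntegrable_const]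
      simp [hIdef]
    have hF1pos : 0 < F 1 := by rw [hF1]; linarith
    -- F s - ε * s is monotone
    have hD : ∀ x : ℝ, HasDerivAt (fun s => F s - ε * s) (g x - ε) x := by
      intro x
      have : HasDerivAt (fun s : ℝ => ε * s) (ε * 1) x := (hasDerivAt_id x).const_mul ε
      have h2 := (hF x).sub this
      rw [mul_one] at h2
      exact h2
    have hDmono : Monotone (fun s => F s - ε * s) := by
      apply monotone_of_deriv_nonneg
      · exact fun x => (hD x).differentiableAt
      · intro x
        rw [(hD x).deriv]
        linarith [hgε x]
    have hFlow : ∀ s : ℝ, 0 ≤ s → ε * s ≤ F s := by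
      intro s hs
      have := hDmono hs
      simp only [hF0, mul_zero, sub_zero] at this
      linarith
    have hFhigh : ∀ s : ℝ, s ≤ 0 → F s ≤ ε * s := by
      intro s hs
      have := hDmono hs
      simp only [hF0, mul_zero, sub_zero] at this
      linarith
    set τ : ℝ → ℝ := fun s => F s / F 1 with hτdef
    have hτ : ∀ b : ℝ, HasDerivAt τ (g b / F 1) b := fun b => (hF b).div_const _
    have hτmono : StrictMono τ :=
      strictMono_of_hasDerivAt_pos hτ (fun b => div_pos (hgpos b) hF1pos)
    have hτc : Continuous τ :=
      continuous_iff_continuousAt.2 fun x => (hτ x).continuousAt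
    have hτtop : Tendsto τ atTop atTop := by
      have hev : (fun s => ε * s / F 1) ≤ᶠ[atTop] τ := by
        filter_upwards [eventually_ge_atTop (0:ℝ)] with s hs
        have h := hFlow s hs
        simp only [hτdef]
        gcongr
      exact tendsto_atTop_mono' atTop hev
        (Tendsto.atTop_div_const hF1pos (Tendsto.const_mul_atTop hε tendsto_id))
    have hτbot : Tendsto τ atBot atBot := by
      have hev : τ ≤ᶠ[atBot] (fun s => ε * s / F 1) := by
        filter_upwards [eventually_le_atBot (0:ℝ)] with s hs
        have h := hFhigh s hs
        simp only [hτdef]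
        gcongr
      exact tendsto_atBot_mono' atBot hev
        (Tendsto.atBot_div_const hF1pos (Tendsto.const_mul_atBot hε tendsto_id))
    have hτsurj : Function.Surjective τ := hτc.surjective hτtop hτbot
    set e : ℝ ≃o ℝ := StrictMono.orderIsoOfSurjective τ hτmono hτsurj with hedef
    have hecoe : (e : ℝ → ℝ) = τ := StrictMono.coe_orderIsoOfSurjective τ hτmono hτsurj
    set σ : ℝ → ℝ := fun t => e.symm t with hσdef
    have hτσ : ∀ y : ℝ, τ (σ y) = y := fun y => by
      have := e.apply_symm_apply y
      rwa [hecoe] at this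
    have hσc : Continuous σ := e.symm.toHomeomorph.continuous
    have hτ0 : τ 0 = 0 := by simp [hτdef, hF0]
    have hτ1 : τ 1 = 1 := by
      simp only [hτdef]
      exact div_self (ne_of_gt hF1pos)
    have hσ0 : σ 0 = 0 := by
      have h0' : e 0 = 0 := by rw [hecoe]; exact hτ0
      show e.symm 0 = 0
      exact e.symm_apply_eq.2 h0'.symm
    have hσ1 : σ 1 = 1 := by
      have h1' : e 1 = 1 := by rw [hecoe]; exact hτ1
      show e.symm 1 = 1
      exact e.symm_apply_eq.2 h1'.symm
    have himg : σ '' Set.Icc 0 1 = Set.Icc 0 1 := by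
      have := e.symm.image_Icc 0 1
      rw [hσdef]
      rw [this]
      rw [show e.symm 0 = σ 0 from rfl, show e.symm 1 = σ 1 from rfl, hσ0, hσ1]
    have hbij : Set.BijOn σ (Set.Icc 0 1) (Set.Icc 0 1) := by
      have h : Set.BijOn σ (Set.Icc 0 1) (σ '' Set.Icc 0 1) :=
        (e.symm.injective.injOn).bijOn_image
      rwa [himg] at h
    set σ' : ℝ → ℝ := fun t => F 1 / g (σ t) with hσ'def
    have hσ'eq : ∀ t : ℝ, σ' t = (g (σ t) / F 1)⁻¹ := fun t => (inv_div _ _).symm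
    have hσd : ∀ t : ℝ, HasDerivAt σ (σ' t) t := by
      intro t
      have h := HasDerivAt.of_local_left_inverse (hσc.continuousAt)
        (hτ (σ t)) (ne_of_gt (div_pos (hgpos _) hF1pos))
        (Filter.Eventually.of_forall hτσ)
      rwa [← hσ'eq t] at h
    have hσ'pos : ∀ t : ℝ, 0 < σ' t := fun t => div_pos hF1pos (hgpos _)
    have hσ'c : Continuous σ' :=
      continuous_const.div (hgc.comp hσc) (fun t => ne_of_gt (hgpos _))
    -- the supremum is at most F 1 = I + ε
    have hbound : ∀ t ∈ Set.Icc (0:ℝ) 1, l (σ t) * σ' t ≤ F 1 := by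
      intro t ht
      have hσt : σ t ∈ Set.Icc (0:ℝ) 1 := hbij.mapsTo ht
      have hgσ : g (σ t) = l (σ t) + ε := by
        simp only [hgdef, hpid _ hσt]
      have hlσ : 0 ≤ l (σ t) := hl0 _ hσt
      show l (σ t) * (F 1 / g (σ t)) ≤ F 1
      rw [hgσ, mul_div_assoc', div_le_iff₀ (by linarith)]
      nlinarith
    set r : ℝ := sSup ((fun t => l (σ t) * σ' t) '' Set.Icc 0 1) with hrdef
    have hrS : r ∈ S := by
      refine ⟨σ, σ', hσ0, hσ1, hbij, ?_, hσ'c.continuousOn, fun t _ => hσ'pos t, rfl⟩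
      exact fun t _ => (hσd t).hasDerivWithinAt
    refine ⟨r, hrS, ?_⟩
    rw [hrdef, ← hF1]
    apply csSup_le
    · exact (Set.nonempty_Icc.2 zero_le_one).image _
    · rintro y ⟨t, ht, rfl⟩
      exact hbound t ht
  -- conclude
  obtain ⟨r₁, hr₁S, _⟩ := upper 1 one_pos
  have hbddb : BddBelow S := ⟨I, fun r hr => lower r hr⟩
  apply le_antisymm
  · apply le_of_forall_pos_le_add
    intro ε hε
    obtain ⟨r, hrS, hrle⟩ := upper ε hε
    exact (csInf_le hbddb hrS).trans hrle
  · exact le_csInf ⟨r₁, hr₁S⟩ (fun r hr => lower r hr)
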